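/- Let θ be a probability density on ℝᵈ with θ(x) > 0 for every x, let Λ̂ : Matrix ι ι ℝ be class-constant, symmetric and positive definite, set q̂(x) := G(x)ᵀ Λ̂ G(x), and suppose ρ̂ := θ/q̂ is again a probability density (∫ ρ̂ = 1) with x ↦ (G x) i * (G x) j * ρ̂(x) Lebesgue integrable for all i j : ι. Let ρ be any probability density with ρ(x) > 0 for a.e. x, with x ↦ (G x) i * (G x) j * ρ(x) integrable for all i j, satisfying the same moment constraints as ρ̂: ∫ (G x) i * (G x) j * ρ(x) dx = ∫ (G x) i * (G x) j * ρ̂(x) dx for all i j : ι. Assume x ↦ θ(x) * Real.log (θ(x)/ρ(x)) and x ↦ θ(x) * Real.log (θ(x)/ρ̂(x)) are integrable. Then ∫ θ * Real.log (θ/ρ̂) ≤ ∫ θ * Real.log (θ/ρ), with equality if and only if ρ = ρ̂ almost everywhere. (This is the optimality and uniqueness content of Theorem 4.7: among all densities matching the power moments up to order 2n, ρ̂ = θ/q(·,Λ̂) uniquely minimizes the Kullback–Leibler distance KL(θ‖ρ).) -/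

import Mathlib

open MeasureTheory

/-- The monomial vector `G(x) = G(x₁) ⊗ ⋯ ⊗ G(x_d)`. -/
noncomputable def Gvec (n d : ℕ) (x : Fin d → ℝ) (i : Fin d → Fin (n + 1)) : ℝ :=
  ∏ t, x t ^ (i t : ℕ)

/-- The quadratic form `q(x, Λ) = G(x)ᵀ Λ G(x)`. -/
noncomputable def quadForm (n d : ℕ)
    (Λ : Matrix (Fin d → Fin (n + 1)) (Fin d → Fin (n + 1)) ℝ)
    (x : Fin d → ℝ) : ℝ :=
  ∑ i, ∑ j, Gvec n d x i * Λ i j * Gvec n d x j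

/-- Class-constant matrices (the paper's parametrization (21)). -/
def ClassConstant (n d : ℕ)
    (Λ : Matrix (Fin d → Fin (n + 1)) (Fin d → Fin (n + 1)) ℝ) : Prop :=
  ∀ i j i' j' : Fin d → Fin (n + 1),
    (∀ t, (i t : ℕ) + (j t : ℕ) = (i' t : ℕ) + (j' t : ℕ)) → Λ i j = Λ i' j'


lemma sub_le_mul_log_div {a b : ℝ} (ha : 0 < a) (hb : 0 < b) :
    a - b ≤ a * Real.log (a / b) := by
  have h := Real.log_le_sub_one_of_pos (div_pos hb ha)
  have hlog : Real.log (a / b) = - Real.log (b / a) := by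
    rw [Real.log_div ha.ne' hb.ne', Real.log_div hb.ne' ha.ne']; ring
  rw [hlog]
  have := mul_le_mul_of_nonneg_left h ha.le
  have hba : a * (b / a) = b := by field_simp
  nlinarith

lemma eq_of_mul_log_div_eq {a b : ℝ} (ha : 0 < a) (hb : 0 < b)
    (h : a * Real.log (a / b) = a - b) : a = b := by
  by_contra hne
  have hba : b / a ≠ 1 := by
    intro h1
    exact hne ((div_eq_one_iff_eq ha.ne').mp h1).symm
  have h2 := Real.log_lt_sub_one_of_pos (div_pos hb ha) hba
  have hlog : Real.log (a / b) = - Real.log (b / a) := by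
    rw [Real.log_div ha.ne' hb.ne', Real.log_div hb.ne' ha.ne']; ring
  have := mul_lt_mul_of_pos_left h2 ha
  have hba2 : a * (b / a) = b := by field_simp
  nlinarith

lemma gibbs {α : Type*} [MeasurableSpace α] {μ : Measure α} (f g : α → ℝ)
    (hf : ∀ x, 0 < f x) (hg : ∀ᵐ x ∂μ, 0 < g x)
    (hfi : Integrable f μ) (hgi : Integrable g μ)
    (hfg : Integrable (fun x => f x * Real.log (f x / g x)) μ)
    (hf1 : ∫ x, f x ∂μ = 1) (hg1 : ∫ x, g x ∂μ = 1) :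
    0 ≤ ∫ x, f x * Real.log (f x / g x) ∂μ ∧
    ((∫ x, f x * Real.log (f x / g x) ∂μ) = 0 ↔ ∀ᵐ x ∂μ, f x = g x) := by
  set h : α → ℝ := fun x => f x * Real.log (f x / g x) - (f x - g x) with hh
  have hint : Integrable h μ := hfg.sub (hfi.sub hgi)
  have hnn : 0 ≤ᶠ[ae μ] h := by
    filter_upwards [hg] with x hgx
    have := sub_le_mul_log_div (hf x) hgx
    simp only [h, Pi.zero_apply]; linarith
  have e1 : Integrable (fun x => f x - g x) μ := hfi.sub hgi
  have hval : ∫ x, h x ∂μ = ∫ x, f x * Real.log (f x / g x) ∂μ := by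
    rw [show (∫ x, h x ∂μ) = ∫ x, f x * Real.log (f x / g x) - (f x - g x) ∂μ from rfl,
      integral_sub hfg e1, integral_sub hfi hgi, hf1, hg1]; ring
  constructor
  · have := integral_nonneg_of_ae hnn
    linarith
  · constructor
    · intro h0
      have : ∫ x, h x ∂μ = 0 := by rw [hval, h0]
      have hz := (integral_eq_zero_iff_of_nonneg_ae hnn hint).mp this
      filter_upwards [hz, hg] with x hx hgx
      have : f x * Real.log (f x / g x) = f x - g x := by
        have : h x = 0 := hx
        simp only [h] at this; linarith
      exact eq_of_mul_log_div_eq (hf x) hgx this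
    · intro hae
      rw [← hval]
      have : h =ᶠ[ae μ] 0 := by
        filter_upwards [hae] with x hx
        simp [h, hx, div_self (lt_of_lt_of_le (hf x) hx.le).ne']
      rw [integral_congr_ae this]; simp

lemma quadForm_integral_aux (n d : ℕ)
    (Λhat : Matrix (Fin d → Fin (n + 1)) (Fin d → Fin (n + 1)) ℝ)
    (σ : (Fin d → ℝ) → ℝ)
    (hσint : ∀ i j : Fin d → Fin (n + 1),
      Integrable (fun x : Fin d → ℝ => Gvec n d x i * Gvec n d x j * σ x)) :
    Integrable (fun x : Fin d → ℝ => quadForm n d Λhat x * σ x) ∧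
    (∫ x : Fin d → ℝ, quadForm n d Λhat x * σ x)
      = ∑ i, ∑ j, Λhat i j * ∫ x : Fin d → ℝ, Gvec n d x i * Gvec n d x j * σ x := by
  have hexp : (fun x : Fin d → ℝ => quadForm n d Λhat x * σ x)
      = fun x => ∑ i, ∑ j, Λhat i j * (Gvec n d x i * Gvec n d x j * σ x) := by
    funext x
    simp only [quadForm, Finset.sum_mul]
    congr 1; ext i; congr 1; ext j; ring
  rw [hexp]
  refine ⟨integrable_finset_sum _ (fun i _ => integrable_finset_sum _
    (fun j _ => (hσint i j).const_mul _)), ?_⟩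
  refine (integral_finset_sum _ (fun i _ => integrable_finset_sum _
    (fun j _ => (hσint i j).const_mul _))).trans ?_
  congr 1; ext i
  refine (integral_finset_sum _ (fun j _ => (hσint i j).const_mul _)).trans ?_
  congr 1; ext j
  exact MeasureTheory.integral_const_mul _ _

/-- optimality and uniqueness in Theorem 4.7: among all densities
matching the power moments of `ρ̂ = θ/q(·,Λ̂)` up to order 2n, `ρ̂` uniquely
minimizes the Kullback–Leibler distance `KL(θ‖ρ)`. -/
theorem kl_minimizer_unique (n d : ℕ) (hd : 1 ≤ d)
    (θ : (Fin d → ℝ) → ℝ) (hθpos : ∀ x, 0 < θ x) (hθm : Measurable θ)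
    (hθ1 : ∫ x : Fin d → ℝ, θ x = 1)
    (Λhat : Matrix (Fin d → Fin (n + 1)) (Fin d → Fin (n + 1)) ℝ)
    (hcc : ClassConstant n d Λhat) (hsym : Λhat.transpose = Λhat)
    (hpd : ∀ v : (Fin d → Fin (n + 1)) → ℝ, v ≠ 0 →
      0 < ∑ i, ∑ j, v i * Λhat i j * v j)
    (ρhat : (Fin d → ℝ) → ℝ)
    (hρhat : ∀ x, ρhat x = θ x / quadForm n d Λhat x)
    (hρhat1 : ∫ x : Fin d → ℝ, ρhat x = 1)
    (hρhatint : ∀ i j : Fin d → Fin (n + 1),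
      Integrable (fun x : Fin d → ℝ => Gvec n d x i * Gvec n d x j * ρhat x))
    (ρ : (Fin d → ℝ) → ℝ) (hρ0 : ∀ x, 0 ≤ ρ x) (hρm : Measurable ρ)
    (hρpos : ∀ᵐ x : Fin d → ℝ ∂volume, 0 < ρ x)
    (hρ1 : ∫ x : Fin d → ℝ, ρ x = 1)
    (hρint : ∀ i j : Fin d → Fin (n + 1),
      Integrable (fun x : Fin d → ℝ => Gvec n d x i * Gvec n d x j * ρ x))
    (hmom : ∀ i j : Fin d → Fin (n + 1),
      (∫ x : Fin d → ℝ, Gvec n d x i * Gvec n d x j * ρ x) =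
      ∫ x : Fin d → ℝ, Gvec n d x i * Gvec n d x j * ρhat x)
    (h1 : Integrable (fun x : Fin d → ℝ => θ x * Real.log (θ x / ρ x)))
    (h2 : Integrable (fun x : Fin d → ℝ => θ x * Real.log (θ x / ρhat x))) :
    ((∫ x : Fin d → ℝ, θ x * Real.log (θ x / ρhat x))
      ≤ ∫ x : Fin d → ℝ, θ x * Real.log (θ x / ρ x)) ∧
    (((∫ x : Fin d → ℝ, θ x * Real.log (θ x / ρhat x))
      = ∫ x : Fin d → ℝ, θ x * Real.log (θ x / ρ x)) ↔
      ∀ᵐ x : Fin d → ℝ ∂volume, ρ x = ρhat x) := by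

  -- q := quadForm is everywhere positive
  have hq : ∀ x, 0 < quadForm n d Λhat x := by
    intro x
    have hne : Gvec n d x ≠ 0 := by
      intro h0
      have := congrFun h0 (fun _ => (0 : Fin (n+1)))
      simp [Gvec] at this
    exact hpd _ hne
  -- θ = q * ρhat
  have hθeq : ∀ x, θ x = quadForm n d Λhat x * ρhat x := by
    intro x
    rw [hρhat]
    field_simp
    rw [mul_div_cancel_right₀ _ (hq x).ne']
  -- θ is integrable
  have hθi : Integrable θ := by
    by_contra hni
    rw [integral_undef hni] at hθ1
    norm_num at hθ1
  -- g := q * ρ is integrable with integral 1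
  obtain ⟨hgi, hgval⟩ := quadForm_integral_aux n d Λhat ρ hρint
  obtain ⟨hgi', hgval'⟩ := quadForm_integral_aux n d Λhat ρhat hρhatint
  have hg1 : ∫ x : Fin d → ℝ, quadForm n d Λhat x * ρ x = 1 := by
    rw [hgval]
    have : ∑ i, ∑ j, Λhat i j * ∫ x : Fin d → ℝ, Gvec n d x i * Gvec n d x j * ρ x
        = ∑ i, ∑ j, Λhat i j * ∫ x : Fin d → ℝ, Gvec n d x i * Gvec n d x j * ρhat x := by
      congr 1; ext i; congr 1; ext j; rw [hmom]
    rw [this, ← hgval']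
    rw [show (fun x : Fin d → ℝ => quadForm n d Λhat x * ρhat x) = θ from
      funext fun x => (hθeq x).symm]
    exact hθ1
  -- g positive a.e.
  have hgpos : ∀ᵐ x : Fin d → ℝ ∂volume, 0 < quadForm n d Λhat x * ρ x := by
    filter_upwards [hρpos] with x hx
    exact mul_pos (hq x) hx
  -- the key a.e. identity
  have haeeq : (fun x : Fin d → ℝ => θ x * Real.log (θ x / ρ x)
        - θ x * Real.log (θ x / ρhat x))
      =ᶠ[ae volume] fun x => θ x * Real.log (θ x / (quadForm n d Λhat x * ρ x)) := by
    filter_upwards [hρpos] with x hx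
    have hθρ : 0 < θ x / ρ x := div_pos (hθpos x) hx
    have hkey : θ x / (quadForm n d Λhat x * ρ x) = (θ x / ρ x) / quadForm n d Λhat x := by
      rw [div_div, mul_comm]
    have hqx : θ x / ρhat x = quadForm n d Λhat x := by
      rw [hρhat]
      field_simp
      rw [mul_comm, mul_div_assoc, div_self (hθpos x).ne', mul_one]
    rw [hkey, Real.log_div hθρ.ne' (hq x).ne', hqx]
    ring
  have hfg : Integrable (fun x : Fin d → ℝ =>
      θ x * Real.log (θ x / (quadForm n d Λhat x * ρ x))) :=
    (h1.sub h2).congr haeeq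
  have hval : ∫ x : Fin d → ℝ, θ x * Real.log (θ x / (quadForm n d Λhat x * ρ x))
      = (∫ x : Fin d → ℝ, θ x * Real.log (θ x / ρ x))
        - ∫ x : Fin d → ℝ, θ x * Real.log (θ x / ρhat x) := by
    rw [← integral_congr_ae haeeq, integral_sub h1 h2]
  obtain ⟨hge, heqv⟩ := gibbs θ (fun x => quadForm n d Λhat x * ρ x)
    hθpos hgpos hθi hgi hfg hθ1 hg1
  rw [hval] at hge heqv
  constructor
  · linarith
  · constructor
    · intro he
      have h0 : (∫ x : Fin d → ℝ, θ x * Real.log (θ x / ρ x))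
          - ∫ x : Fin d → ℝ, θ x * Real.log (θ x / ρhat x) = 0 := by linarith
      filter_upwards [heqv.mp h0] with x hx
      rw [hρhat, hx, mul_comm, mul_div_assoc, div_self (hq x).ne', mul_one]
    · intro hae
      have : ∀ᵐ x : Fin d → ℝ ∂volume, θ x = quadForm n d Λhat x * ρ x := by
        filter_upwards [hae] with x hx
        rw [hx, ← hθeq]
      have := heqv.mpr this
      linarith
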